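/- arXiv:2208.01953 — 3 statements merged into one kernel-verified Lean document; each statement's English description precedes it below -/
import Mathlib

section
/- Let G be a finite simple graph and let u, v be adjacent vertices that both have degree exactly 2 in G. Then every cycle of G containing u also contains v, and consequently no minimal feedback vertex set of G contains both u and v. -/
open SimpleGraph

def IsFVS {V : Type*} (G : SimpleGraph V) (S : Set V) : Prop :=
  (G.induce (Sᶜ : Set V)).IsAcyclic

def IsMinFVS {V : Type*} (G : SimpleGraph V) (S : Set V) : Prop :=
  IsFVS G S ∧ ∀ T : Set V, T ⊂ S → ¬ IsFVS G T


-- lift a walk with support in s to the induced graph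
lemma lift_walk {V : Type*} {G : SimpleGraph V} {s : Set V} :
    ∀ {a b : V} (p : G.Walk a b) (ha : a ∈ s) (hb : b ∈ s)
      (hs : ∀ x ∈ p.support, x ∈ s),
      ∃ q : (G.induce s).Walk ⟨a, ha⟩ ⟨b, hb⟩,
        q.map (SimpleGraph.Embedding.induce s).toHom = p := by
  intro a b p
  induction p with
  | nil => intro ha hb hs; exact ⟨.nil, rfl⟩
  | @cons a c b h p ih =>
    intro ha hb hs
    have hc : c ∈ s := hs c (by simp)
    obtain ⟨q, hq⟩ := ih hc hb (fun x hx => hs x (by simp [hx]))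
    refine ⟨.cons (by simpa using h : (G.induce s).Adj ⟨a, ha⟩ ⟨c, hc⟩) q, ?_⟩
    simp [SimpleGraph.Walk.map_cons, hq]

-- in a cycle at u, there are two distinct neighbors of u on it
lemma cycle_two_nbrs {V : Type*} {G : SimpleGraph V} {u : V}
    (c : G.Walk u u) (hc : c.IsCycle) :
    ∃ w w', w ≠ w' ∧ G.Adj u w ∧ G.Adj u w' ∧ w ∈ c.support ∧ w' ∈ c.support := by
  cases c with
  | nil => exact absurd rfl hc.ne_nil
  | @cons _ w _ h p =>
    obtain ⟨w', h', q, hq⟩ := SimpleGraph.Walk.exists_eq_cons_of_ne (G.ne_of_adj h) p.reverse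
    have hw' : w' ∈ p.support := by
      have : w' ∈ p.reverse.support := by rw [hq]; simp
      simpa using this
    have hedge : s(u, w') ∈ p.edges := by
      have : s(u, w') ∈ p.reverse.edges := by rw [hq]; simp
      simpa using this
    refine ⟨w, w', ?_, h, h', by simp, by simp [hw']⟩
    rintro rfl
    have ht := hc.isTrail.edges_nodup
    rw [SimpleGraph.Walk.edges_cons] at ht
    exact (List.nodup_cons.mp ht).1 hedge

/-- If `u` and `v` are adjacent and both have degree 2, then every cycle
through `u` also passes through `v`, and no minimal feedback vertex set
contains both of them. -/
theorem adjacent_degree_two_cycles {V : Type*} [Fintype V] [DecidableEq V]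
    {G : SimpleGraph V} [DecidableRel G.Adj] (u v : V) (huv : G.Adj u v)
    (hdu : G.degree u = 2) (hdv : G.degree v = 2) :
    (∀ (x : V) (c : G.Walk x x), c.IsCycle → u ∈ c.support → v ∈ c.support) ∧
      (∀ S : Set V, IsMinFVS G S → ¬ (u ∈ S ∧ v ∈ S)) := by
  have part1 : ∀ (x : V) (c : G.Walk x x), c.IsCycle → u ∈ c.support → v ∈ c.support := by
    intro x c hc hu
    have hc' := hc.rotate hu
    obtain ⟨w, w', hne, hw, hw', hws, hw's⟩ := cycle_two_nbrs (c.rotate u hu) hc'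
    have hvmem : v = w ∨ v = w' := by
      have hsub : ({w, w'} : Finset V) ⊆ G.neighborFinset u := by
        intro z hz
        simp only [Finset.mem_insert, Finset.mem_singleton] at hz
        rcases hz with rfl | rfl <;> simpa [SimpleGraph.mem_neighborFinset]
      have hcard : ({w, w'} : Finset V).card = 2 := by
        rw [Finset.card_insert_of_notMem (by simpa), Finset.card_singleton]
      have heq : ({w, w'} : Finset V) = G.neighborFinset u :=
        Finset.eq_of_subset_of_card_le hsub (by
          rw [hcard]
          exact le_of_eq ((SimpleGraph.card_neighborFinset_eq_degree G u).trans hdu))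
      have hvn : v ∈ G.neighborFinset u := by simpa [SimpleGraph.mem_neighborFinset]
      rw [← heq] at hvn
      simpa using hvn
    have hvrot : v ∈ (c.rotate u hu).support := by
      rcases hvmem with rfl | rfl <;> assumption
    have hvtail : v ∈ (c.rotate u hu).support.tail := by
      rw [SimpleGraph.Walk.support_eq_cons, List.mem_cons] at hvrot
      rcases hvrot with h | h
      · exact absurd h huv.ne'
      · exact h
    exact List.mem_of_mem_tail ((SimpleGraph.Walk.support_rotate c u hu).mem_iff.mp hvtail)
  refine ⟨part1, ?_⟩
  rintro S ⟨hS, hmin⟩ ⟨huS, hvS⟩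
  have hssub : S \ {u} ⊂ S := by
    constructor
    · exact Set.diff_subset
    · intro hsub
      exact (hsub huS).2 rfl
  have hT := hmin (S \ {u}) hssub
  rw [IsFVS] at hT
  simp only [SimpleGraph.IsAcyclic, not_forall, not_not] at hT
  obtain ⟨x, c, hc⟩ := hT
  have hc2 : (c.map (SimpleGraph.Embedding.induce (G := G) ((S \ {u})ᶜ : Set V)).toHom).IsCycle :=
    hc.map (SimpleGraph.Embedding.induce (G := G) ((S \ {u})ᶜ : Set V)).injective
  set c2 := c.map (SimpleGraph.Embedding.induce (G := G) ((S \ {u})ᶜ : Set V)).toHom with hc2def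
  have hsupp : ∀ y ∈ c2.support, y ∈ ((S \ {u})ᶜ : Set V) := by
    intro y hy
    rw [hc2def, SimpleGraph.Walk.support_map] at hy
    obtain ⟨z, _, rfl⟩ := List.mem_map.mp hy
    exact z.2
  by_cases hu : u ∈ c2.support
  · have hv := part1 _ c2 hc2 hu
    exact hsupp v hv ⟨hvS, huv.ne'⟩
  · have hsupp' : ∀ y ∈ c2.support, y ∈ (Sᶜ : Set V) := by
      intro y hy hyS
      refine hsupp y hy ⟨hyS, ?_⟩
      rintro rfl
      exact hu hy
    have hxs : (x : V) ∈ (Sᶜ : Set V) :=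
      hsupp' _ (SimpleGraph.Walk.start_mem_support c2)
    obtain ⟨q, hq⟩ := lift_walk (s := (Sᶜ : Set V)) c2 hxs hxs hsupp'
    have hqc : q.IsCycle := by
      rw [← SimpleGraph.Walk.map_isCycle_iff_of_injective
        (f := (SimpleGraph.Embedding.induce (G := G) (Sᶜ : Set V)).toHom)
        ((SimpleGraph.Embedding.induce (G := G) (Sᶜ : Set V)).injective), hq]
      exact hc2
    exact hS q hqc
end

section
/- For n ≥ 2, consider the graph G_n obtained from two adjacent vertices x, y both joined to every vertex of an independent set of size n. Then the vertex cover number of G_n equals 2, while G_n has a minimal feedback vertex set of size n. Hence the gap between the vertex cover number and the maximum size of a minimal feedback vertex set can be arbitrarily large. -/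
open SimpleGraph

def IsVertexCover {V : Type*} (G : SimpleGraph V) (C : Set V) : Prop :=
  ∀ ⦃u w : V⦄, G.Adj u w → u ∈ C ∨ w ∈ C

/-- The graph `G_n` on `Fin (n+2)`: vertices `0 = x` and `1 = y` are adjacent
to each other and to every vertex `i ≥ 2` (an independent set of size `n`). -/
def Gn (n : ℕ) : SimpleGraph (Fin (n + 2)) :=
  SimpleGraph.fromRel (fun i _ => i = 0 ∨ i = 1)

lemma gn_adj (n : ℕ) (i j : Fin (n+2)) :
    (Gn n).Adj i j ↔ i ≠ j ∧ (i = 0 ∨ i = 1 ∨ j = 0 ∨ j = 1) := by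
  simp [Gn, fromRel_adj]; tauto

lemma two_le_ncard_of_pair {α : Type*} [Finite α] {C : Set α} {a b : α} (ha : a ∈ C) (hb : b ∈ C)
    (hab : a ≠ b) : 2 ≤ C.ncard := by
  rw [← Set.ncard_pair hab]
  exact Set.ncard_le_ncard (by rintro x (rfl | rfl) <;> [exact ha; exact hb]) C.toFinite

lemma acyclic_of_two {V : Type*} [DecidableEq V] (G : SimpleGraph V) (a b : V)
    (h : ∀ v, v = a ∨ v = b) : G.IsAcyclic := by
  intro v c hc
  have h3 := hc.three_le_length
  have hnd : c.support.tail.Nodup := hc.2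
  have hlen : c.support.tail.length = c.length := by
    have := c.length_support
    simp [List.length_tail, this]
  have hcard : c.support.tail.toFinset.card = c.length := by
    rw [List.toFinset_card_of_nodup hnd, hlen]
  have hsub : c.support.tail.toFinset ⊆ {a, b} := by
    intro x hx
    rcases h x with rfl | rfl <;> simp
  have := Finset.card_le_card hsub
  have h2 : ({a, b} : Finset V).card ≤ 2 := Finset.card_insert_le _ _ |>.trans (by simp)
  omega

lemma triangle_not_fvs (n : ℕ) (T : Set (Fin (n+2))) (h0 : (0:Fin (n+2)) ∈ Tᶜ)
    (h1 : (1:Fin (n+2)) ∈ Tᶜ) (v : Fin (n+2)) (hv : v ∈ Tᶜ) (hv0 : v ≠ 0) (hv1 : v ≠ 1) :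
    ¬ IsFVS (Gn n) T := by
  intro hac
  have h01 : (0:Fin (n+2)) ≠ 1 := by
    intro h; exact absurd (Fin.val_eq_of_eq h) (by simp)
  have a01 : ((Gn n).induce Tᶜ).Adj ⟨0, h0⟩ ⟨1, h1⟩ := by
    simp [induce, comap_adj, gn_adj, h01]
  have a1v : ((Gn n).induce Tᶜ).Adj ⟨1, h1⟩ ⟨v, hv⟩ := by
    simp [induce, comap_adj, gn_adj, hv1.symm]
  have av0 : ((Gn n).induce Tᶜ).Adj ⟨v, hv⟩ ⟨0, h0⟩ := by
    simp [induce, comap_adj, gn_adj, hv0]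
  have hcyc : (Walk.cons a01 (Walk.cons a1v (Walk.cons av0 Walk.nil))).IsCycle := by
    rw [Walk.isCycle_def]
    refine ⟨?_, by simp, ?_⟩
    · rw [Walk.isTrail_def]
      simp [Sym2.eq, Sym2.rel_iff', Subtype.ext_iff]
      refine ⟨⟨?_, ?_⟩, ?_⟩ <;> tauto
    · simp only [Walk.support_cons, Walk.support_nil, List.tail_cons, List.nodup_cons,
        List.mem_cons, List.mem_singleton, List.not_mem_nil, Subtype.mk.injEq, List.nodup_nil]
      simp [Subtype.ext_iff, hv0, hv1, Ne.symm hv0, Ne.symm hv1]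
  exact hac _ hcyc

/-- `vc(G_n) = 2` while `G_n` has a minimal feedback vertex set of size `n`:
the gap between the vertex cover number and the maximum size of a minimal
feedback vertex set can be arbitrarily large. -/
theorem vc_vs_max_minimal_fvs (n : ℕ) (hn : 2 ≤ n) :
    sInf {k : ℕ | ∃ C : Set (Fin (n + 2)), _root_.IsVertexCover (Gn n) C ∧ C.ncard = k} = 2 ∧
    ∃ S : Set (Fin (n + 2)), IsMinFVS (Gn n) S ∧ S.ncard = n := by
  have h01 : (0:Fin (n+2)) ≠ 1 := by
    intro h; exact absurd (Fin.val_eq_of_eq h) (by simp)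
  constructor
  · -- vertex cover number = 2
    set K := {k : ℕ | ∃ C : Set (Fin (n + 2)), _root_.IsVertexCover (Gn n) C ∧ C.ncard = k} with hK
    have hmem2 : 2 ∈ K := by
      refine ⟨{0, 1}, ?_, Set.ncard_pair h01⟩
      intro u w huw
      rw [gn_adj] at huw
      rcases huw.2 with h | h | h | h <;> simp [h]
    have hlow : ∀ k ∈ K, 2 ≤ k := by
      rintro k ⟨C, hC, rfl⟩
      set v2 : Fin (n+2) := ⟨2, by omega⟩ with hv2
      set v3 : Fin (n+2) := ⟨3, by omega⟩ with hv3
      have ha : (Gn n).Adj 0 v2 := by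
        rw [gn_adj]
        refine ⟨?_, Or.inl rfl⟩
        intro h; exact absurd (congrArg Fin.val h) (by simp [hv2, Fin.val_zero])
      have hb : (Gn n).Adj 1 v3 := by
        rw [gn_adj]
        refine ⟨?_, Or.inr (Or.inl rfl)⟩
        intro h; exact absurd (congrArg Fin.val h) (by simp [hv3, Fin.val_one])
      rcases hC ha with hA | hA <;> rcases hC hb with hB | hB <;>
        exact two_le_ncard_of_pair hA hB (by simp [Fin.ext_iff, hv2, hv3])
    refine le_antisymm (Nat.sInf_le hmem2) ?_
    exact le_csInf ⟨2, hmem2⟩ hlow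
  · -- minimal FVS of size n
    refine ⟨({0, 1} : Set (Fin (n+2)))ᶜ, ⟨?_, ?_⟩, ?_⟩
    · show ((Gn n).induce (({0,1} : Set (Fin (n+2)))ᶜᶜ)).IsAcyclic
      rw [compl_compl]
      apply acyclic_of_two _ ⟨0, by simp⟩ ⟨1, by simp⟩
      rintro ⟨v, hv⟩
      rcases hv with rfl | hv
      · exact Or.inl rfl
      · rw [Set.mem_singleton_iff] at hv; subst hv; exact Or.inr rfl
    · intro T hT
      obtain ⟨v, hvS, hvT⟩ := Set.exists_of_ssubset hT
      have hTsub := hT.subset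
      have h0T : (0:Fin (n+2)) ∈ Tᶜ := fun h => (hTsub h) (by simp)
      have h1T : (1:Fin (n+2)) ∈ Tᶜ := fun h => (hTsub h) (by simp)
      have hv0 : v ≠ 0 := fun h => hvS (by simp [h])
      have hv1 : v ≠ 1 := fun h => hvS (by simp [h])
      exact triangle_not_fvs n T h0T h1T v hvT hv0 hv1
    · have := Set.ncard_add_ncard_compl ({0,1} : Set (Fin (n+2)))
      rw [Set.ncard_pair h01] at this
      simp [Nat.card_eq_fintype_card] at this
      omega
end

section
/- Let G be a finite simple graph on n vertices and let G' be obtained from G by adding a vertex x adjacent to all of V(G), vertices x₁,…,x_{n+3} each adjacent to x, and a vertex y adjacent to each xᵢ. If C is a minimal vertex cover of G with |C| ≥ k, then C ∪ {x₂, x₃, …, x_{n+3}} is a minimal feedback vertex set of G' of size at least k + n + 2. -/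
open SimpleGraph

def IsMinVertexCover {V : Type*} (G : SimpleGraph V) (C : Set V) : Prop :=
  _root_.IsVertexCover G C ∧ ∀ T : Set V, T ⊂ C → ¬ _root_.IsVertexCover G T

/-- Relation for the extended graph `G'` (see paper): `Sum.inr false = x`,
`Sum.inr true = y`, `Sum.inl (Sum.inl v)` are vertices of `G`, and
`Sum.inl (Sum.inr i)` are the new vertices `x₁,…,x_{n+3}`. -/
def extRel {V : Type*} [Fintype V] (G : SimpleGraph V) :
    (V ⊕ Fin (Fintype.card V + 3)) ⊕ Bool →
    (V ⊕ Fin (Fintype.card V + 3)) ⊕ Bool → Prop :=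
  fun a b =>
    match a, b with
    | .inl (.inl v), .inl (.inl w) => G.Adj v w
    | .inr false, .inl _ => True
    | .inr true, .inl (.inr _) => True
    | _, _ => False

def Gext {V : Type*} [Fintype V] (G : SimpleGraph V) :
    SimpleGraph ((V ⊕ Fin (Fintype.card V + 3)) ⊕ Bool) :=
  SimpleGraph.fromRel (extRel G)


section AdjLemmas

variable {V : Type*} [Fintype V] (G : SimpleGraph V)

lemma adj_x_fv (v : V) :
    (Gext G).Adj (.inr false) (.inl (.inl v)) := by
  rw [Gext, fromRel_adj]
  exact ⟨by simp, Or.inl trivial⟩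

lemma adj_x_gi (i : Fin (Fintype.card V + 3)) :
    (Gext G).Adj (.inr false) (.inl (.inr i)) := by
  rw [Gext, fromRel_adj]
  exact ⟨by simp, Or.inl trivial⟩

lemma adj_y_gi (i : Fin (Fintype.card V + 3)) :
    (Gext G).Adj (.inr true) (.inl (.inr i)) := by
  rw [Gext, fromRel_adj]
  exact ⟨by simp, Or.inl trivial⟩

lemma adj_fv_fw {v w : V} (h : G.Adj v w) :
    (Gext G).Adj (.inl (.inl v)) (.inl (.inl w)) := by
  rw [Gext, fromRel_adj]
  exact ⟨by simp [h.ne], Or.inl h⟩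

lemma adj_y_elim {z : (V ⊕ Fin (Fintype.card V + 3)) ⊕ Bool}
    (h : (Gext G).Adj (.inr true) z) : ∃ i, z = .inl (.inr i) := by
  rw [Gext, fromRel_adj] at h
  obtain ⟨hne, h | h⟩ := h <;> rcases z with (v | i) | (_ | _) <;> simp_all [extRel]

lemma adj_gi_elim {i : Fin (Fintype.card V + 3)}
    {z : (V ⊕ Fin (Fintype.card V + 3)) ⊕ Bool}
    (h : (Gext G).Adj (.inl (.inr i)) z) : z = .inr false ∨ z = .inr true := by
  rw [Gext, fromRel_adj] at h
  obtain ⟨hne, h | h⟩ := h <;> rcases z with (v | j) | (_ | _) <;> simp_all [extRel]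

lemma adj_fv_elim {v : V} {z : (V ⊕ Fin (Fintype.card V + 3)) ⊕ Bool}
    (h : (Gext G).Adj (.inl (.inl v)) z) :
    (∃ w, z = .inl (.inl w) ∧ G.Adj v w) ∨ z = .inr false := by
  rw [Gext, fromRel_adj] at h
  obtain ⟨hne, h | h⟩ := h <;> rcases z with (v' | j) | (_ | _) <;>
    simp_all [extRel]
  · exact h.symm

end AdjLemmas


lemma cycle_start_two_nbrs {W : Type*} {H : SimpleGraph W} {u : W} {c : H.Walk u u}
    (hc : c.IsCycle) :
    ∃ a b, a ≠ b ∧ H.Adj u a ∧ H.Adj u b ∧ a ∈ c.support ∧ b ∈ c.support := by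
  cases c with
  | nil => exact absurd hc Walk.IsCycle.not_of_nil
  | @cons _ w _ h p =>
    have h3 := hc.three_le_length
    rw [Walk.length_cons] at h3
    have hrev : ¬ p.reverse.Nil := by
      rw [Walk.not_nil_iff_lt_length, Walk.length_reverse]; omega
    obtain ⟨b, hub, q, hpq⟩ := Walk.not_nil_iff.mp hrev
    have hedge : s(u, b) ∈ p.edges := by
      have : s(u, b) ∈ p.reverse.edges := by rw [hpq]; simp
      rwa [Walk.edges_reverse, List.mem_reverse] at this
    have hbsupp : b ∈ p.support := Walk.snd_mem_support_of_mem_edges p hedge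
    have hne : w ≠ b := by
      rintro rfl
      have hnd := hc.isCircuit.isTrail.edges_nodup
      rw [Walk.edges_cons, List.nodup_cons] at hnd
      exact hnd.1 hedge
    exact ⟨w, b, hne, h, hub, by simp, by simp [hbsupp]⟩

lemma cycle_two_nbrs_s15 {W : Type*} {H : SimpleGraph W} {v : W} {c : H.Walk v v}
    (hc : c.IsCycle) {u : W} (hu : u ∈ c.support) :
    ∃ a b, a ≠ b ∧ H.Adj u a ∧ H.Adj u b ∧ a ∈ c.support ∧ b ∈ c.support := by
  classical
  obtain ⟨a, b, hab, ha, hb, has, hbs⟩ := cycle_start_two_nbrs (hc.rotate hu)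
  have hsub : ∀ z, z ∈ (c.rotate u hu).support → z ∈ c.support := by
    intro z hz
    rw [Walk.support_eq_cons] at hz
    rcases List.mem_cons.mp hz with rfl | hz
    · exact hu
    · have := (Walk.support_rotate c u hu).mem_iff.mp hz
      exact List.mem_of_mem_tail this
  exact ⟨a, b, hab, ha, hb, hsub a has, hsub b hbs⟩

lemma not_isAcyclic_of_triangle {W : Type*} {H : SimpleGraph W} {a b c : W}
    (hab : H.Adj a b) (hbc : H.Adj b c) (hca : H.Adj c a) : ¬ H.IsAcyclic := by
  intro hA
  refine hA (.cons hab (.cons hbc (.cons hca .nil))) ?_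
  have h1 := hab.ne; have h2 := hbc.ne; have h3 := hca.ne
  rw [Walk.isCycle_def, Walk.isTrail_def]
  refine ⟨?_, by simp, ?_⟩
  · simp [Sym2.eq_iff]
    tauto
  · simp
    tauto

lemma not_isAcyclic_of_quad {W : Type*} {H : SimpleGraph W} {a b c d : W}
    (hab : H.Adj a b) (hbc : H.Adj b c) (hcd : H.Adj c d) (hda : H.Adj d a)
    (hac : a ≠ c) (hbd : b ≠ d) : ¬ H.IsAcyclic := by
  intro hA
  refine hA (.cons hab (.cons hbc (.cons hcd (.cons hda .nil)))) ?_
  have h1 := hab.ne; have h2 := hbc.ne; have h3 := hcd.ne; have h4 := hda.ne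
  rw [Walk.isCycle_def, Walk.isTrail_def]
  refine ⟨?_, by simp, ?_⟩
  · simp [Sym2.eq_iff]
    tauto
  · simp
    tauto

/-- If `C` is a minimal vertex cover of `G` with `|C| ≥ k`, then
`C ∪ {x₂, …, x_{n+3}}` is a minimal feedback vertex set of `G'` of size at
least `k + n + 2`. -/
theorem minimal_fvs_of_minimal_vc {V : Type*} [Fintype V] (G : SimpleGraph V)
    (k : ℕ) (C : Set V) (hC : IsMinVertexCover G C) (hk : k ≤ C.ncard) :
    IsMinFVS (Gext G)
      ((fun v : V => (Sum.inl (Sum.inl v) : (V ⊕ Fin (Fintype.card V + 3)) ⊕ Bool)) '' C ∪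
        {z | ∃ i : Fin (Fintype.card V + 3), i ≠ 0 ∧ z = Sum.inl (Sum.inr i)}) ∧
    k + Fintype.card V + 2 ≤
      ((fun v : V => (Sum.inl (Sum.inl v) : (V ⊕ Fin (Fintype.card V + 3)) ⊕ Bool)) '' C ∪
        {z | ∃ i : Fin (Fintype.card V + 3), i ≠ 0 ∧ z = Sum.inl (Sum.inr i)}).ncard := by
  classical
  set S : Set ((V ⊕ Fin (Fintype.card V + 3)) ⊕ Bool) :=
    (fun v : V => (Sum.inl (Sum.inl v) : (V ⊕ Fin (Fintype.card V + 3)) ⊕ Bool)) '' C ∪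
      {z | ∃ i : Fin (Fintype.card V + 3), i ≠ 0 ∧ z = Sum.inl (Sum.inr i)} with hSdef
  have hxS : (Sum.inr false : (V ⊕ Fin (Fintype.card V + 3)) ⊕ Bool) ∉ S := by
    simp [hSdef]
  have hyS : (Sum.inr true : (V ⊕ Fin (Fintype.card V + 3)) ⊕ Bool) ∉ S := by
    simp [hSdef]
  have hgS : ∀ i : Fin (Fintype.card V + 3),
      ((Sum.inl (Sum.inr i) : (V ⊕ Fin (Fintype.card V + 3)) ⊕ Bool) ∈ S ↔ i ≠ 0) := by
    intro i; simp [hSdef]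
  have hfS : ∀ v : V,
      ((Sum.inl (Sum.inl v) : (V ⊕ Fin (Fintype.card V + 3)) ⊕ Bool) ∈ S ↔ v ∈ C) := by
    intro v; simp [hSdef]
  refine ⟨⟨?_, ?_⟩, ?_⟩
  · -- S is an FVS
    intro v0 c hc
    have key1 : ∀ u : ↥(Sᶜ), u ∈ c.support → u.val ≠ Sum.inr true := by
      rintro u hu hval
      obtain ⟨a, b, hab, ha, hb, -, -⟩ := cycle_two_nbrs_s15 hc hu
      have ha' : (Gext G).Adj u.val a.val := ha
      have hb' : (Gext G).Adj u.val b.val := hb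
      rw [hval] at ha' hb'
      obtain ⟨i, hi⟩ := adj_y_elim G ha'
      obtain ⟨j, hj⟩ := adj_y_elim G hb'
      have hi0 : i = 0 := by
        have h2 := a.2
        rw [Set.mem_compl_iff, hi, hgS] at h2
        simpa using h2
      have hj0 : j = 0 := by
        have h2 := b.2
        rw [Set.mem_compl_iff, hj, hgS] at h2
        simpa using h2
      exact hab (Subtype.ext (by rw [hi, hj, hi0, hj0]))
    have key2 : ∀ u : ↥(Sᶜ), u ∈ c.support → u.val = Sum.inr false := by
      rintro u hu
      obtain ⟨a, b, hab, ha, hb, has, hbs⟩ := cycle_two_nbrs_s15 hc hu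
      have ha' : (Gext G).Adj u.val a.val := ha
      have hb' : (Gext G).Adj u.val b.val := hb
      obtain ⟨uval, hus⟩ := u
      rcases uval with (v | i) | (_ | _)
      · -- u = f v with v ∉ C
        exfalso
        have hvC : v ∉ C := by
          rw [Set.mem_compl_iff, hfS] at hus; exact hus
        have hnbr : ∀ z : ↥(Sᶜ),
            (Gext G).Adj (Sum.inl (Sum.inl v)) z.val → z.val = Sum.inr false := by
          intro z hz
          rcases adj_fv_elim G hz with ⟨w, hw, hvw⟩ | h
          · exfalso
            rcases hC.1 hvw with h1 | h1
            · exact hvC h1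
            · have h2 := z.2
              rw [Set.mem_compl_iff, hw, hfS] at h2
              exact h2 h1
          · exact h
        have hA := hnbr a ha'
        have hB := hnbr b hb'
        exact hab (Subtype.ext (hA.trans hB.symm))
      · -- u = g i with i = 0
        exfalso
        have hi0 : i = 0 := by
          have h2 := hus
          rw [Set.mem_compl_iff, hgS] at h2
          simpa using h2
        subst hi0
        rcases adj_gi_elim G ha' with h1 | h1
        · rcases adj_gi_elim G hb' with h2 | h2
          · exact hab (Subtype.ext (h1.trans h2.symm))
          · exact key1 b hbs h2
        · exact key1 a has h1
      · rfl
      · exact absurd rfl (key1 ⟨Sum.inr true, hus⟩ hu)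
    obtain ⟨u2, hadj, q, hce⟩ := Walk.not_nil_iff.mp hc.not_nil
    have h1 : v0.val = Sum.inr false := key2 v0 c.start_mem_support
    have h2 : u2.val = Sum.inr false := key2 u2 (by rw [hce]; simp)
    have : (Gext G).Adj v0.val u2.val := hadj
    rw [h1, h2] at this
    exact this.ne rfl
  · -- minimality
    intro T hT hTfvs
    obtain ⟨s, hsS, hsT⟩ := Set.exists_of_ssubset hT
    have hTsub := hT.subset
    rw [hSdef] at hsS
    rcases hsS with ⟨v, hvC, rfl⟩ | ⟨i, hi0, rfl⟩
    · -- removed a vertex of C : triangle x, v, w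
      have hnc := hC.2 (C \ {v}) (Set.sdiff_singleton_ssubset.mpr hvC)
      rw [_root_.IsVertexCover] at hnc
      push_neg at hnc
      obtain ⟨uu, ww, hadj, huu, hww⟩ := hnc
      have hvw : ∃ w, G.Adj v w ∧ w ∉ C := by
        rcases hC.1 hadj with h | h
        · have huv : uu = v := by
            by_contra hne
            exact huu ⟨h, hne⟩
          subst huv
          refine ⟨ww, hadj, fun hwc => ?_⟩
          exact hww ⟨hwc, fun h' => hadj.ne (h' ▸ rfl)⟩
        · have hwv : ww = v := by
            by_contra hne
            exact hww ⟨h, hne⟩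
          subst hwv
          refine ⟨uu, hadj.symm, fun huc => ?_⟩
          exact huu ⟨huc, fun h' => hadj.ne (h' ▸ rfl)⟩
      obtain ⟨w, hvw, hwC⟩ := hvw
      have hxT : (Sum.inr false : (V ⊕ Fin (Fintype.card V + 3)) ⊕ Bool) ∈ Tᶜ :=
        fun h => hxS (hTsub h)
      have hvT : (Sum.inl (Sum.inl v) : (V ⊕ Fin (Fintype.card V + 3)) ⊕ Bool) ∈ Tᶜ := hsT
      have hwT : (Sum.inl (Sum.inl w) : (V ⊕ Fin (Fintype.card V + 3)) ⊕ Bool) ∈ Tᶜ :=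
        fun h => hwC ((hfS w).mp (hTsub h))
      exact not_isAcyclic_of_triangle
        (a := ⟨Sum.inr false, hxT⟩) (b := ⟨Sum.inl (Sum.inl v), hvT⟩)
        (c := ⟨Sum.inl (Sum.inl w), hwT⟩)
        (adj_x_fv G v) (adj_fv_fw G hvw) ((adj_x_fv G w).symm) hTfvs
    · -- removed x_i : 4-cycle x, x_i, y, x_0
      have hxT : (Sum.inr false : (V ⊕ Fin (Fintype.card V + 3)) ⊕ Bool) ∈ Tᶜ :=
        fun h => hxS (hTsub h)
      have hyT : (Sum.inr true : (V ⊕ Fin (Fintype.card V + 3)) ⊕ Bool) ∈ Tᶜ :=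
        fun h => hyS (hTsub h)
      have hiT : (Sum.inl (Sum.inr i) : (V ⊕ Fin (Fintype.card V + 3)) ⊕ Bool) ∈ Tᶜ := hsT
      have h0T : (Sum.inl (Sum.inr (0 : Fin (Fintype.card V + 3)))
          : (V ⊕ Fin (Fintype.card V + 3)) ⊕ Bool) ∈ Tᶜ :=
        fun h => by simpa using (hgS 0).mp (hTsub h)
      exact not_isAcyclic_of_quad
        (a := ⟨Sum.inr false, hxT⟩) (b := ⟨Sum.inl (Sum.inr i), hiT⟩)
        (c := ⟨Sum.inr true, hyT⟩) (d := ⟨Sum.inl (Sum.inr 0), h0T⟩)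
        (adj_x_gi G i) ((adj_y_gi G i).symm) (adj_y_gi G 0) ((adj_x_gi G 0).symm)
        (by simp) (fun h => hi0 (by simpa using h)) hTfvs
  · -- cardinality
    have hinj : Function.Injective
        (fun v : V => (Sum.inl (Sum.inl v) : (V ⊕ Fin (Fintype.card V + 3)) ⊕ Bool)) := by
      intro a b h; simpa using h
    have hdisj : Disjoint
        ((fun v : V => (Sum.inl (Sum.inl v) : (V ⊕ Fin (Fintype.card V + 3)) ⊕ Bool)) '' C)
        {z : (V ⊕ Fin (Fintype.card V + 3)) ⊕ Bool |
          ∃ i : Fin (Fintype.card V + 3), i ≠ 0 ∧ z = Sum.inl (Sum.inr i)} := by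
      rw [Set.disjoint_left]
      rintro z ⟨v, -, rfl⟩ ⟨i, -, h⟩
      simp at h
    have hBeq : {z : (V ⊕ Fin (Fintype.card V + 3)) ⊕ Bool |
          ∃ i : Fin (Fintype.card V + 3), i ≠ 0 ∧ z = Sum.inl (Sum.inr i)} =
        (fun i : Fin (Fintype.card V + 3) =>
          (Sum.inl (Sum.inr i) : (V ⊕ Fin (Fintype.card V + 3)) ⊕ Bool)) ''
          {i : Fin (Fintype.card V + 3) | i ≠ 0} := by
      ext z
      constructor
      · rintro ⟨i, hi, rfl⟩; exact ⟨i, hi, rfl⟩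
      · rintro ⟨i, hi, rfl⟩; exact ⟨i, hi, rfl⟩
    have hBcard : {z : (V ⊕ Fin (Fintype.card V + 3)) ⊕ Bool |
          ∃ i : Fin (Fintype.card V + 3), i ≠ 0 ∧ z = Sum.inl (Sum.inr i)}.ncard =
        Fintype.card V + 2 := by
      rw [hBeq, Set.ncard_image_of_injective _ (fun a b h => by simpa using h)]
      have h1 : {i : Fin (Fintype.card V + 3) | i ≠ 0} =
          (Set.univ : Set (Fin (Fintype.card V + 3))) \ {0} := by
        ext j; simp
      rw [h1, Set.ncard_diff (by simp) (Set.toFinite _)]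
      simp [Set.ncard_univ]
    rw [hSdef, Set.ncard_union_eq hdisj (Set.toFinite _) (Set.toFinite _),
      Set.ncard_image_of_injective _ hinj, hBcard]
    omega
end
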